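/- Let k be a commutative ring, g a Lie algebra over k, R a commutative k-algebra, and R' a commutative R-algebra that is faithfully flat and formally étale over R. Let R'' = R' ⊗_R R' with canonical maps p₁, p₂ : R' → R'', and set R''₀ = {s ∈ R'' : d''(s) = 0 for every k-derivation d of R}, where for d ∈ Der_k(R), d' denotes its unique extension to R' and d'' the unique k-derivation of R'' with d'' ∘ pᵢ = pᵢ ∘ d' (i = 1,2). Let u be an automorphism of the Lie algebra g ⊗_k R'' over R'' such that both u and u⁻¹ map g ⊗ 1 into the image of g ⊗_k R''₀ in g ⊗_k R''. Define L_u = {x ∈ g ⊗_k R' : u((id_g ⊗ p₁)(x)) = (id_g ⊗ p₂)(x)}, a Lie algebra over R. Assume moreover that every k-linear endomorphism χ of L_u satisfying χ([x,y]) = [χ(x),y] = [x,χ(y)] is of the form x ↦ r • x for a unique r ∈ R. Then: (1) for each d ∈ Der_k(R), the restriction ρ(d) of id_g ⊗ d' to L_u is a k-linear Lie derivation of L_u, and ρ : Der_k(R) → Der_k(L_u) is an injective Lie algebra homomorphism satisfying ρ(d)(r • x) = d(r) • x + r • ρ(d)(x) for all r ∈ R, x ∈ L_u; (2) every k-linear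 Lie derivation δ of L_u decomposes uniquely as δ = δ₀ + ρ(d) with δ₀ an R-linear derivation of L_u and d ∈ Der_k(R); and (3) the R-linear derivations form a Lie ideal of Der_k(L_u), so Der_k(L_u) = Der_R(L_u) ⋊ ρ(Der_k(R)). -/
import Mathlib


open TensorProduct

set_option maxSynthPendingDepth 3
set_option maxHeartbeats 1600000

/-- (Theorem, main result.)  Let `k` be a commutative ring, `g` a Lie
algebra over `k`, `R` a commutative `k`-algebra and `R'` a faithfully flat, formally
étale commutative `R`-algebra; set `R'' = R' ⊗[R] R'` with canonical maps `p₁, p₂`.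
For `d ∈ Der_k(R)` let `D' d` be its unique extension to `R'` and `D'' d` the unique
`k`-derivation of `R''` compatible with `D' d` via `p₁` and `p₂`; let
`R''₀ = {s : R'' | D'' d s = 0 for all d}`.  Let `u` be an automorphism of the Lie
algebra `R'' ⊗[k] g` over `R''` such that `u` and `u⁻¹` map `g ⊗ 1` into the image of
`R''₀ ⊗ g`, and let `L_u = {x : R' ⊗[k] g | u (p₁ᵍ x) = p₂ᵍ x}` (presented by a Lie
algebra `Lu` over `R` together with an embedding `ι` onto the descent locus).  Assume
that the canonical map `R → Ctd_k(L_u)` is an isomorphism.  Then the derivations `ρ d`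
obtained by restricting `id_g ⊗ D' d` to `L_u` yield an injective Lie algebra
homomorphism `ρ : Der_k(R) → Der_k(L_u)` satisfying the Leibniz rule
`ρ d (r • x) = d r • x + r • ρ d x`; every `k`-linear Lie derivation `δ` of `L_u`
decomposes uniquely as `δ = δ₀ + ρ d` with `δ₀` `R`-linear, and the `R`-linear
derivations form a Lie ideal, so that `Der_k(L_u) = Der_R(L_u) ⋊ ρ(Der_k(R))`. -/

private lemma aux_rTensor_smul {k A g : Type*} [CommRing k] [CommRing A] [Algebra k A]
    [LieRing g] [LieAlgebra k g] (E : Derivation k A A) (s : A) (w : A ⊗[k] g) :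
    LinearMap.rTensor g E.toLinearMap (s • w)
      = E s • w + s • LinearMap.rTensor g E.toLinearMap w := by
  induction w using TensorProduct.induction_on with
  | zero => simp
  | tmul t x =>
      rw [TensorProduct.smul_tmul', LinearMap.rTensor_tmul, LinearMap.rTensor_tmul,
        TensorProduct.smul_tmul', TensorProduct.smul_tmul']
      show (E (s * t)) ⊗ₜ[k] x = (E s • t) ⊗ₜ[k] x + (s • E t) ⊗ₜ[k] x
      rw [E.leibniz, ← TensorProduct.add_tmul]
      congr 1
      simp only [smul_eq_mul]
      ring
  | add a b ha hb =>
      rw [smul_add, map_add, ha, hb, map_add, smul_add, smul_add]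
      abel

private lemma aux_rTensor_lie {k A g : Type*} [CommRing k] [CommRing A] [Algebra k A]
    [LieRing g] [LieAlgebra k g] (E : Derivation k A A) (a b : A ⊗[k] g) :
    LinearMap.rTensor g E.toLinearMap ⁅a, b⁆
      = ⁅LinearMap.rTensor g E.toLinearMap a, b⁆ + ⁅a, LinearMap.rTensor g E.toLinearMap b⁆ := by
  induction a using TensorProduct.induction_on with
  | zero => simp
  | tmul s x =>
      induction b using TensorProduct.induction_on with
      | zero => simp
      | tmul t y =>
          rw [LieAlgebra.ExtendScalars.bracket_tmul, LinearMap.rTensor_tmul,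
            LinearMap.rTensor_tmul, LinearMap.rTensor_tmul,
            LieAlgebra.ExtendScalars.bracket_tmul, LieAlgebra.ExtendScalars.bracket_tmul]
          show (E (s * t)) ⊗ₜ[k] ⁅x, y⁆ = (E s * t) ⊗ₜ[k] ⁅x, y⁆ + (s * E t) ⊗ₜ[k] ⁅x, y⁆
          rw [E.leibniz, ← TensorProduct.add_tmul]
          congr 1
          simp only [smul_eq_mul]
          ring
      | add c d hc hd =>
          rw [lie_add, map_add, hc, hd, map_add, lie_add, lie_add]
          abel
  | add c d hc hd =>
      rw [add_lie, map_add, hc, hd, map_add, add_lie, add_lie]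
      abel

theorem derivations_of_etale_descent_form.{u'}
    (k : Type*) [CommRing k] (g : Type*) [LieRing g] [LieAlgebra k g]
    (R : Type u') [CommRing R] [Algebra k R]
    (R' : Type u') [CommRing R'] [Algebra R R'] [Algebra k R'] [IsScalarTower k R R']
    [Algebra.FormallyEtale R R'] [Module.FaithfullyFlat R R']
    -- the unique extensions of `k`-derivations of `R` to `R'` and to `R'' = R' ⊗[R] R'`
    (D' : Derivation k R R → Derivation k R' R')
    (hD' : ∀ (d : Derivation k R R) (r : R),
      D' d (algebraMap R R' r) = algebraMap R R' (d r))
    (D'' : Derivation k R R → Derivation k (R' ⊗[R] R') (R' ⊗[R] R'))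
    (hD''₁ : ∀ (d : Derivation k R R) (s : R'),
      D'' d (s ⊗ₜ[R] (1 : R')) = (D' d s) ⊗ₜ[R] (1 : R'))
    (hD''₂ : ∀ (d : Derivation k R R) (s : R'),
      D'' d ((1 : R') ⊗ₜ[R] s) = (1 : R') ⊗ₜ[R] (D' d s))
    -- the two maps `pᵢᵍ = pᵢ ⊗ id_g : g ⊗ R' → g ⊗ R''`
    (p₁g p₂g : (R' ⊗[k] g) →ₗ[k] ((R' ⊗[R] R') ⊗[k] g))
    (hp₁ : ∀ (s : R') (x : g), p₁g (s ⊗ₜ[k] x) = (s ⊗ₜ[R] (1 : R')) ⊗ₜ[k] x)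
    (hp₂ : ∀ (s : R') (x : g), p₂g (s ⊗ₜ[k] x) = ((1 : R') ⊗ₜ[R] s) ⊗ₜ[k] x)
    -- the descent cocycle: an automorphism of the Lie algebra `R'' ⊗ g` over `R''`
    (u : ((R' ⊗[R] R') ⊗[k] g) ≃ₗ⁅R' ⊗[R] R'⁆ ((R' ⊗[R] R') ⊗[k] g))
    (hu : ∀ x : g, u ((1 : R' ⊗[R] R') ⊗ₜ[k] x) ∈
      Submodule.span k {y : (R' ⊗[R] R') ⊗[k] g |
        ∃ (s : R' ⊗[R] R') (x' : g), (∀ d : Derivation k R R, D'' d s = 0) ∧ y = s ⊗ₜ[k] x'})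
    (hu' : ∀ x : g, u.symm ((1 : R' ⊗[R] R') ⊗ₜ[k] x) ∈
      Submodule.span k {y : (R' ⊗[R] R') ⊗[k] g |
        ∃ (s : R' ⊗[R] R') (x' : g), (∀ d : Derivation k R R, D'' d s = 0) ∧ y = s ⊗ₜ[k] x'})
    -- the twisted form `L_u`, presented as a Lie algebra `Lu` over `R` (and over `k`)
    -- identified by `ι` with the descent locus `{x : R' ⊗[k] g | u (p₁ᵍ x) = p₂ᵍ x}`
    (Lu : Type*) [LieRing Lu] [LieAlgebra k Lu] [LieAlgebra R Lu] [IsScalarTower k R Lu]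
    (ι : Lu →ₗ[k] (R' ⊗[k] g))
    (hι_inj : Function.Injective ι)
    (hι_lie : ∀ x y : Lu, ι ⁅x, y⁆ = ⁅ι x, ι y⁆)
    (hι_smul : ∀ (r : R) (x : Lu), ι (r • x) = algebraMap R R' r • ι x)
    (hι_range : ∀ y : R' ⊗[k] g, (∃ x : Lu, ι x = y) ↔ u (p₁g y) = p₂g y)
    -- assumption (i): the canonical map `R → Ctd_k(L_u)` is an isomorphism
    (hcent : ∀ χ : Lu →ₗ[k] Lu,
      (∀ x y : Lu, χ ⁅x, y⁆ = ⁅χ x, y⁆ ∧ χ ⁅x, y⁆ = ⁅x, χ y⁆) →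
      ∃! r : R, ∀ x : Lu, χ x = r • x) :
    ∃ ρ : Derivation k R R →ₗ⁅k⁆ LieDerivation k Lu Lu,
      -- (1) `ρ d` is the restriction of `id_g ⊗ D' d` to `L_u`, it is `k`-linear, and
      -- `ρ` is an injective Lie algebra homomorphism satisfying the Leibniz rule
      (∀ (d : Derivation k R R) (x : Lu),
        ι (ρ d x) = LinearMap.rTensor g (D' d).toLinearMap (ι x)) ∧
      Function.Injective ρ ∧
      (∀ (d : Derivation k R R) (r : R) (x : Lu),
        ρ d (r • x) = d r • x + r • ρ d x) ∧
      -- (2) unique decomposition `δ = δ₀ + ρ d` with `δ₀` an `R`-linear derivation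
      (∀ δ : LieDerivation k Lu Lu,
        ∃! p : LieDerivation k Lu Lu × Derivation k R R,
          (∀ (r : R) (x : Lu), p.1 (r • x) = r • p.1 x) ∧ δ = p.1 + ρ p.2) ∧
      -- (3) the `R`-linear derivations form a Lie ideal of `Der_k(L_u)`
      (∀ δ δ₀ : LieDerivation k Lu Lu,
        (∀ (r : R) (x : Lu), δ₀ (r • x) = r • δ₀ x) →
        ∀ (r : R) (x : Lu), ⁅δ, δ₀⁆ (r • x) = r • ⁅δ, δ₀⁆ x) := by
  classical
  -- Step 0: every `R`-derivation of `R'` vanishes, since `R'` is formally unramified over `R`.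
  have hRder : ∀ (E : Derivation R R' R') (x : R'), E x = 0 := by
    intro E x
    rw [← Derivation.liftKaehlerDifferential_comp_D E x,
      Subsingleton.elim (KaehlerDifferential.D R R' x) 0, map_zero]
  -- Uniqueness of `k`-derivations of `R'` agreeing on (the image of) `R`.
  have Duniq : ∀ (E F : Derivation k R' R'),
      (∀ r : R, E (algebraMap R R' r) = F (algebraMap R R' r)) → ∀ x : R', E x = F x := by
    intro E F h x
    have key : E x - F x = 0 := by
      let G : Derivation R R' R' :=
        { toFun := fun y => E y - F y
          map_add' := by intro a b; simp only [map_add]; abel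
          map_smul' := by
            intro r a
            show E (r • a) - F (r • a) = r • (E a - F a)
            rw [Algebra.smul_def r a, Algebra.smul_def r (E a - F a),
              Derivation.leibniz, Derivation.leibniz, h r]
            simp only [smul_eq_mul]
            ring
          map_one_eq_zero' := by
            show E 1 - F 1 = 0
            rw [Derivation.map_one_eq_zero, Derivation.map_one_eq_zero, sub_self]
          leibniz' := by
            intro a b
            show E (a * b) - F (a * b) = a • (E b - F b) + b • (E a - F a)
            rw [Derivation.leibniz, Derivation.leibniz]
            simp only [smul_eq_mul]
            ring }
      exact hRder G x
    exact sub_eq_zero.mp key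
  have halg : ∀ (c : k) (r : R), algebraMap R R' (c • r) = c • algebraMap R R' r := by
    intro c r
    rw [Algebra.smul_def c r, map_mul, ← IsScalarTower.algebraMap_apply, ← Algebra.smul_def]
  -- linearity and bracket-compatibility of `D'`
  have hD'add : ∀ (d e : Derivation k R R) (x : R'), D' (d + e) x = D' d x + D' e x := by
    intro d e x
    have h := Duniq (D' d + D' e) (D' (d + e)) ?_ x
    · rw [Derivation.add_apply] at h
      exact h.symm
    intro r
    rw [Derivation.add_apply, hD', hD', hD', Derivation.add_apply, map_add]
  have hD'smul : ∀ (c : k) (d : Derivation k R R) (x : R'), D' (c • d) x = c • D' d x := by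
    intro c d x
    have h := Duniq (c • D' d) (D' (c • d)) ?_ x
    · rw [Derivation.smul_apply] at h
      exact h.symm
    intro r
    rw [Derivation.smul_apply, hD', hD', Derivation.smul_apply, halg]
  have hD'lie : ∀ (d e : Derivation k R R) (x : R'),
      D' ⁅d, e⁆ x = D' d (D' e x) - D' e (D' d x) := by
    intro d e x
    have h := Duniq ⁅D' d, D' e⁆ (D' ⁅d, e⁆) ?_ x
    · rw [Derivation.commutator_apply] at h
      exact h.symm
    intro r
    rw [Derivation.commutator_apply, hD', hD', hD', hD', hD', Derivation.commutator_apply,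
      map_sub]
  -- pointwise versions on the tensor product
  have hΔadd : ∀ (d e : Derivation k R R) (w : R' ⊗[k] g),
      LinearMap.rTensor g (D' (d + e)).toLinearMap w
        = LinearMap.rTensor g (D' d).toLinearMap w
          + LinearMap.rTensor g (D' e).toLinearMap w := by
    intro d e w
    have h1 : (D' (d + e)).toLinearMap = (D' d).toLinearMap + (D' e).toLinearMap :=
      LinearMap.ext fun x => by rw [LinearMap.add_apply]; exact hD'add d e x
    rw [h1, LinearMap.rTensor_add, LinearMap.add_apply]
  have hΔsmul : ∀ (c : k) (d : Derivation k R R) (w : R' ⊗[k] g),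
      LinearMap.rTensor g (D' (c • d)).toLinearMap w
        = c • LinearMap.rTensor g (D' d).toLinearMap w := by
    intro c d w
    have h1 : (D' (c • d)).toLinearMap = c • (D' d).toLinearMap :=
      LinearMap.ext fun x => by rw [LinearMap.smul_apply]; exact hD'smul c d x
    rw [h1, LinearMap.rTensor_smul, LinearMap.smul_apply]
  have hΔlie : ∀ (d e : Derivation k R R) (w : R' ⊗[k] g),
      LinearMap.rTensor g (D' ⁅d, e⁆).toLinearMap w
        = LinearMap.rTensor g (D' d).toLinearMap (LinearMap.rTensor g (D' e).toLinearMap w)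
          - LinearMap.rTensor g (D' e).toLinearMap
              (LinearMap.rTensor g (D' d).toLinearMap w) := by
    intro d e w
    have h1 : (D' ⁅d, e⁆).toLinearMap
        = (D' d).toLinearMap ∘ₗ (D' e).toLinearMap - (D' e).toLinearMap ∘ₗ (D' d).toLinearMap :=
      LinearMap.ext fun x => by
        rw [LinearMap.sub_apply, LinearMap.comp_apply, LinearMap.comp_apply]
        exact hD'lie d e x
    rw [h1, LinearMap.rTensor_sub, LinearMap.sub_apply, LinearMap.rTensor_comp,
      LinearMap.rTensor_comp, LinearMap.comp_apply, LinearMap.comp_apply]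
  -- `Δ'' d` kills the span of the flat sections
  have hker : ∀ (d : Derivation k R R) (w : (R' ⊗[R] R') ⊗[k] g),
      w ∈ Submodule.span k {y : (R' ⊗[R] R') ⊗[k] g |
        ∃ (s : R' ⊗[R] R') (x' : g), (∀ d' : Derivation k R R, D'' d' s = 0) ∧ y = s ⊗ₜ[k] x'} →
      LinearMap.rTensor g (D'' d).toLinearMap w = 0 := by
    intro d w hw
    have hle : Submodule.span k {y : (R' ⊗[R] R') ⊗[k] g |
        ∃ (s : R' ⊗[R] R') (x' : g), (∀ d' : Derivation k R R, D'' d' s = 0) ∧ y = s ⊗ₜ[k] x'}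
        ≤ LinearMap.ker (LinearMap.rTensor g (D'' d).toLinearMap) := by
      rw [Submodule.span_le]
      rintro y ⟨s, x', hs, rfl⟩
      simp only [SetLike.mem_coe, LinearMap.mem_ker, LinearMap.rTensor_tmul]
      rw [show (D'' d).toLinearMap s = D'' d s from rfl, hs d, TensorProduct.zero_tmul]
    exact LinearMap.mem_ker.mp (hle hw)
  have husmul : ∀ (s : R' ⊗[R] R') (z : (R' ⊗[R] R') ⊗[k] g), u (s • z) = s • u z :=
    fun s z => u.toLieHom.map_smul s z
  have husymmsmul : ∀ (s : R' ⊗[R] R') (z : (R' ⊗[R] R') ⊗[k] g),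
      u.symm (s • z) = s • u.symm z :=
    fun s z => u.symm.toLieHom.map_smul s z
  have hu_zero : u (0 : (R' ⊗[R] R') ⊗[k] g) = 0 := u.toLieHom.map_zero
  have husym_zero : u.symm (0 : (R' ⊗[R] R') ⊗[k] g) = 0 := u.symm.toLieHom.map_zero
  have hu_add : ∀ a b : (R' ⊗[R] R') ⊗[k] g, u (a + b) = u a + u b :=
    fun a b => u.toLieHom.map_add a b
  have husym_add : ∀ a b : (R' ⊗[R] R') ⊗[k] g, u.symm (a + b) = u.symm a + u.symm b :=
    fun a b => u.symm.toLieHom.map_add a b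
  -- the key commutation: `u` commutes with `id ⊗ D'' d`
  have hsymm : ∀ (d : Derivation k R R) (w : (R' ⊗[R] R') ⊗[k] g),
      u.symm (LinearMap.rTensor g (D'' d).toLinearMap (u w))
        = LinearMap.rTensor g (D'' d).toLinearMap w := by
    intro d w
    induction w using TensorProduct.induction_on with
    | zero => rw [hu_zero, map_zero, husym_zero]
    | tmul s x =>
        have h1 : (s ⊗ₜ[k] x : (R' ⊗[R] R') ⊗[k] g) = s • ((1 : R' ⊗[R] R') ⊗ₜ[k] x) := by
          rw [TensorProduct.smul_tmul', smul_eq_mul, mul_one]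
        have hu0 : LinearMap.rTensor g (D'' d).toLinearMap (u ((1 : R' ⊗[R] R') ⊗ₜ[k] x)) = 0 :=
          hker d _ (hu x)
        have h2 : LinearMap.rTensor g (D'' d).toLinearMap ((1 : R' ⊗[R] R') ⊗ₜ[k] x) = 0 := by
          rw [LinearMap.rTensor_tmul,
            show (D'' d).toLinearMap (1 : R' ⊗[R] R') = D'' d 1 from rfl,
            Derivation.map_one_eq_zero, TensorProduct.zero_tmul]
        rw [h1, husmul, aux_rTensor_smul, hu0, smul_zero, add_zero, husymmsmul,
          LieEquiv.symm_apply_apply, aux_rTensor_smul, h2, smul_zero, add_zero]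
    | add a b ha hb => rw [hu_add, map_add, husym_add, ha, hb, map_add]
  have hcommu : ∀ (d : Derivation k R R) (w : (R' ⊗[R] R') ⊗[k] g),
      u (LinearMap.rTensor g (D'' d).toLinearMap w)
        = LinearMap.rTensor g (D'' d).toLinearMap (u w) := by
    intro d w
    conv_lhs => rw [← hsymm d w]
    rw [LieEquiv.apply_symm_apply]
  -- compatibility of `Δ` with `p₁, p₂`
  have hp₁Δ : ∀ (d : Derivation k R R) (y : R' ⊗[k] g),
      p₁g (LinearMap.rTensor g (D' d).toLinearMap y)
        = LinearMap.rTensor g (D'' d).toLinearMap (p₁g y) := by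
    intro d y
    induction y using TensorProduct.induction_on with
    | zero => simp
    | tmul s x =>
        rw [LinearMap.rTensor_tmul, hp₁, hp₁, LinearMap.rTensor_tmul,
          show (D'' d).toLinearMap (s ⊗ₜ[R] (1 : R')) = D'' d (s ⊗ₜ[R] (1 : R')) from rfl,
          hD''₁]
        rfl
    | add a b ha hb => simp only [map_add, ha, hb]
  have hp₂Δ : ∀ (d : Derivation k R R) (y : R' ⊗[k] g),
      p₂g (LinearMap.rTensor g (D' d).toLinearMap y)
        = LinearMap.rTensor g (D'' d).toLinearMap (p₂g y) := by
    intro d y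
    induction y using TensorProduct.induction_on with
    | zero => simp
    | tmul s x =>
        rw [LinearMap.rTensor_tmul, hp₂, hp₂, LinearMap.rTensor_tmul,
          show (D'' d).toLinearMap ((1 : R') ⊗ₜ[R] s) = D'' d ((1 : R') ⊗ₜ[R] s) from rfl,
          hD''₂]
        rfl
    | add a b ha hb => simp only [map_add, ha, hb]
  -- `Δ d` preserves the descent locus, giving maps `ρf d : Lu → Lu`
  have hlift : ∀ (d : Derivation k R R) (x : Lu),
      ∃ z : Lu, ι z = LinearMap.rTensor g (D' d).toLinearMap (ι x) := by
    intro d x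
    refine (hι_range _).mpr ?_
    have hy : u (p₁g (ι x)) = p₂g (ι x) := (hι_range (ι x)).mp ⟨x, rfl⟩
    rw [hp₁Δ, hp₂Δ, ← hy, ← hcommu]
  let ρf : Derivation k R R → Lu → Lu := fun d x => (hlift d x).choose
  have hρι : ∀ (d : Derivation k R R) (x : Lu),
      ι (ρf d x) = LinearMap.rTensor g (D' d).toLinearMap (ι x) :=
    fun d x => (hlift d x).choose_spec
  -- structure of `ρf d`
  have hρadd : ∀ d (x y : Lu), ρf d (x + y) = ρf d x + ρf d y := by
    intro d x y
    apply hι_inj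
    simp only [map_add, hρι]
  have hρsmulk : ∀ d (c : k) (x : Lu), ρf d (c • x) = c • ρf d x := by
    intro d c x
    apply hι_inj
    simp only [map_smul, hρι]
  have hρlie : ∀ d (x y : Lu), ρf d ⁅x, y⁆ = ⁅ρf d x, y⁆ + ⁅x, ρf d y⁆ := by
    intro d x y
    apply hι_inj
    rw [hρι, hι_lie, map_add, hι_lie, hι_lie, hρι, hρι]
    exact aux_rTensor_lie (D' d) (ι x) (ι y)
  have hρleib : ∀ d (r : R) (x : Lu), ρf d (r • x) = d r • x + r • ρf d x := by
    intro d r x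
    apply hι_inj
    rw [hρι, hι_smul, aux_rTensor_smul, hD', map_add, hι_smul, hι_smul, hρι]
  -- assemble the Lie derivations and the Lie algebra morphism `ρ`
  let ρder : Derivation k R R → LieDerivation k Lu Lu := fun d =>
    { toLinearMap :=
        { toFun := ρf d
          map_add' := hρadd d
          map_smul' := hρsmulk d }
      leibniz' := fun a b => by
        show ρf d ⁅a, b⁆ = ⁅a, ρf d b⁆ - ⁅b, ρf d a⁆
        rw [hρlie d a b, ← lie_skew (ρf d a) b]
        abel }
  have hρder_apply : ∀ d (x : Lu), ρder d x = ρf d x := fun d x => rfl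
  let ρ : Derivation k R R →ₗ⁅k⁆ LieDerivation k Lu Lu :=
    { toFun := ρder
      map_add' := fun d e => by
        ext x
        rw [LieDerivation.add_apply]
        show ρf (d + e) x = ρf d x + ρf e x
        apply hι_inj
        simp only [map_add, hρι]
        exact hΔadd d e (ι x)
      map_smul' := fun c d => by
        ext x
        rw [RingHom.id_apply, LieDerivation.smul_apply]
        show ρf (c • d) x = c • ρf d x
        apply hι_inj
        simp only [map_smul, hρι]
        exact hΔsmul c d (ι x)
      map_lie' := fun {d e} => by
        ext x
        rw [LieDerivation.commutator_apply]
        show ρf ⁅d, e⁆ x = ρf d (ρf e x) - ρf e (ρf d x)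
        apply hι_inj
        simp only [map_sub, hρι]
        exact hΔlie d e (ι x) }
  have hρ_apply : ∀ d (x : Lu), ρ d x = ρf d x := fun d x => rfl
  have hρleib' : ∀ d (r : R) (x : Lu), ρ d (r • x) = d r • x + r • ρ d x :=
    fun d r x => hρleib d r x
  -- commutation of the two scalar actions on `Lu`
  have hkR : ∀ (c : k) (t : R) (x : Lu), t • (c • x) = c • (t • x) := by
    intro c t x
    rw [← algebraMap_smul R c x, smul_smul, mul_comm, ← smul_smul, algebraMap_smul]
  -- the "centroid" element attached to a derivation and a scalar
  have hchi : ∀ (δ : LieDerivation k Lu Lu) (r : R),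
      ∃! c : R, ∀ x : Lu, δ (r • x) - r • δ x = c • x := by
    intro δ r
    refine hcent
      { toFun := fun x => δ (r • x) - r • δ x
        map_add' := by
          intro x y
          show δ (r • (x + y)) - r • δ (x + y)
            = (δ (r • x) - r • δ x) + (δ (r • y) - r • δ y)
          rw [smul_add, map_add, map_add, smul_add]
          abel
        map_smul' := by
          intro m x
          show δ (r • m • x) - r • δ (m • x) = m • (δ (r • x) - r • δ x)
          rw [hkR m r x, map_smul δ m (r • x), map_smul δ m x, hkR m r (δ x), smul_sub] }
      fun x y => ⟨?_, ?_⟩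
    · show δ (r • ⁅x, y⁆) - r • δ ⁅x, y⁆ = ⁅δ (r • x) - r • δ x, y⁆
      rw [← smul_lie r x y, LieDerivation.apply_lie_eq_add δ (r • x) y,
        LieDerivation.apply_lie_eq_add δ x y, smul_add, ← smul_lie r x (δ y),
        ← smul_lie r (δ x) y, sub_lie]
      abel
    · show δ (r • ⁅x, y⁆) - r • δ ⁅x, y⁆ = ⁅x, δ (r • y) - r • δ y⁆
      rw [← lie_smul r x y, LieDerivation.apply_lie_eq_add δ x (r • y),
        LieDerivation.apply_lie_eq_add δ x y, smul_add, ← lie_smul r x (δ y),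
        ← lie_smul r (δ x) y, lie_sub]
      abel
  refine ⟨ρ, fun d x => hρι d x, ?_, hρleib', ?_, ?_⟩
  · -- injectivity of ρ
    intro d₁ d₂ h
    ext r
    have hx : ∀ x : Lu, ρf d₁ x = ρf d₂ x := fun x => LieDerivation.congr_fun h x
    have key : ∀ x : Lu, d₁ r • x = d₂ r • x := by
      intro x
      have e1 : d₁ r • x + r • ρf d₁ x = d₂ r • x + r • ρf d₂ x := by
        rw [← hρleib d₁ r x, ← hρleib d₂ r x]
        exact hx (r • x)
      rw [hx x] at e1
      exact add_right_cancel e1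
    have hχ := hcent
      { toFun := fun x : Lu => d₁ r • x
        map_add' := fun x y => smul_add _ x y
        map_smul' := fun m x => hkR m (d₁ r) x }
      (fun x y => ⟨(smul_lie (d₁ r) x y).symm, (lie_smul (d₁ r) x y).symm⟩)
    exact hχ.unique (fun x => rfl) fun x => key x
  · -- unique decomposition
    intro δ
    have hc := fun r => hchi δ r
    let c : R → R := fun r => (hc r).choose
    have hcs : ∀ (r : R) (x : Lu), δ (r • x) - r • δ x = c r • x := fun r => (hc r).choose_spec.1
    have hcu : ∀ (r c' : R), (∀ x : Lu, δ (r • x) - r • δ x = c' • x) → c' = c r :=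
      fun r c' h' => (hc r).choose_spec.2 c' h'
    let dd : Derivation k R R :=
      { toFun := c
        map_add' := by
          intro a b
          show c (a + b) = c a + c b
          refine (hcu (a + b) (c a + c b) ?_).symm
          intro x
          rw [add_smul, add_smul, map_add,
            show δ (a • x) + δ (b • x) - (a • δ x + b • δ x)
              = (δ (a • x) - a • δ x) + (δ (b • x) - b • δ x) by abel,
            hcs a x, hcs b x, add_smul]
        map_smul' := by
          intro m a
          show c (m • a) = m • c a
          refine (hcu (m • a) (m • c a) ?_).symm
          intro x
          rw [smul_assoc m a x, map_smul, smul_assoc m a (δ x), ← smul_sub, hcs a x,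
            smul_assoc]
        map_one_eq_zero' := by
          show c 1 = 0
          refine (hcu 1 0 ?_).symm
          intro x
          rw [one_smul, one_smul, sub_self, zero_smul]
        leibniz' := by
          intro a b
          show c (a * b) = a • c b + b • c a
          refine (hcu (a * b) (a • c b + b • c a) ?_).symm
          intro x
          rw [mul_smul a b x, mul_smul a b (δ x),
            show δ (a • b • x) - a • b • δ x
              = (δ (a • (b • x)) - a • δ (b • x)) + a • (δ (b • x) - b • δ x) by
                rw [smul_sub]; abel,
            hcs a (b • x), hcs b x, smul_smul, smul_smul, add_smul, smul_eq_mul,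
            smul_eq_mul, mul_comm (c a) b]
          exact add_comm _ _ }
    have hdd_apply : ∀ r : R, dd r = c r := fun r => rfl
    refine ⟨(δ - ρ dd, dd), ⟨?_, ?_⟩, ?_⟩
    · intro r x
      show (δ - ρ dd) (r • x) = r • (δ - ρ dd) x
      rw [LieDerivation.sub_apply, LieDerivation.sub_apply, hρleib' dd r x, hdd_apply,
        smul_sub]
      have h1 : δ (r • x) = c r • x + r • δ x := by
        rw [← hcs r x]; abel
      rw [h1]
      abel
    · show δ = (δ - ρ dd) + ρ dd
      ext x
      rw [LieDerivation.add_apply, LieDerivation.sub_apply]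
      abel
    · rintro ⟨δ₀', d'⟩ ⟨h1, h2⟩
      have hd : d' = dd := by
        ext r
        show d' r = c r
        refine hcu r (d' r) ?_
        intro x
        have e1 := LieDerivation.congr_fun h2 (r • x)
        have e2 := LieDerivation.congr_fun h2 x
        rw [LieDerivation.add_apply] at e1 e2
        rw [e1, e2, h1 r x, hρleib' d' r x, smul_add]
        abel
      have hδ : δ₀' = δ - ρ dd := by
        rw [← hd, h2]
        ext x
        rw [LieDerivation.sub_apply, LieDerivation.add_apply]
        abel
      exact Prod.ext hδ hd
  · -- R-linear derivations form an ideal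
    intro δ δ₀ h₀ r x
    obtain ⟨cr, hcr, -⟩ := hchi δ r
    have h1 := hcr x
    rw [sub_eq_iff_eq_add] at h1
    have h2 := hcr (δ₀ x)
    rw [sub_eq_iff_eq_add] at h2
    rw [LieDerivation.commutator_apply, LieDerivation.commutator_apply, h₀ r x, h2, h1,
      map_add, h₀ r (δ x), h₀ cr x, smul_sub]
    abel
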